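/- Let V ⊆ F_q^D be a linear code with relative minimum distance λ, and let ε, δ > 0 with ε < 1/3 and δ < 1 - (1-λ+ε)^{1/3}. Suppose u, u* ∈ F_q^D satisfy Pr_{x ∈ F_q}[Δ(u* + x·u, V) < δ] ≥ 2/(ε²·q). Then there exist codewords v, v* ∈ V and a subset C ⊆ D with |C| ≥ (1-δ-ε)|D| such that u agrees with v on C and u* agrees with v* on C. -/

import Mathlib

open Finset
open scoped Classical

/-- Relative Hamming distance between two functions on a finite domain. -/
noncomputable def relDist {D F : Type*} [Fintype D] (u v : D → F) : ℝ :=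
  ((Finset.univ.filter (fun i => u i ≠ v i)).card : ℝ) / (Fintype.card D)

private lemma agree_card_lt {D F : Type*} [Fintype D] (hn : 0 < Fintype.card D)
    {w v : D → F} {δ : ℝ} (h : relDist w v < δ) :
    (1 - δ) * (Fintype.card D : ℝ) < ((Finset.univ.filter (fun y => w y = v y)).card : ℝ) := by
  unfold relDist at h
  have hn' : (0:ℝ) < (Fintype.card D : ℝ) := by exact_mod_cast hn
  rw [div_lt_iff₀ hn'] at h
  have hc := Finset.card_filter_add_card_filter_not
    (s := (Finset.univ : Finset D)) (p := fun y => w y = v y)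
  have hc' : ((Finset.univ.filter (fun y => w y = v y)).card : ℝ)
      + ((Finset.univ.filter (fun y => w y ≠ v y)).card : ℝ) = (Fintype.card D : ℝ) := by
    rw [← Finset.card_univ]
    exact_mod_cast hc
  nlinarith [hc', h]

private lemma agree_card_le {D F : Type*} [Fintype D] {lam : ℝ}
    {a b : D → F} (h : lam ≤ relDist a b) :
    ((Finset.univ.filter (fun y => a y = b y)).card : ℝ) ≤ (1 - lam) * (Fintype.card D : ℝ) := by
  rcases Nat.eq_zero_or_pos (Fintype.card D) with h0 | hn
  · have : (Finset.univ : Finset D) = ∅ := Finset.card_eq_zero.mp (by simpa using h0)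
    simp [this, h0]
  unfold relDist at h
  have hn' : (0:ℝ) < (Fintype.card D : ℝ) := by exact_mod_cast hn
  rw [le_div_iff₀ hn'] at h
  have hc := Finset.card_filter_add_card_filter_not
    (s := (Finset.univ : Finset D)) (p := fun y => a y = b y)
  have hc' : ((Finset.univ.filter (fun y => a y = b y)).card : ℝ)
      + ((Finset.univ.filter (fun y => a y ≠ b y)).card : ℝ) = (Fintype.card D : ℝ) := by
    rw [← Finset.card_univ]
    exact_mod_cast hc
  nlinarith [hc', h]

private lemma relDist_le_one {D F : Type*} [Fintype D] (u v : D → F) : relDist u v ≤ 1 := by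
  unfold relDist
  rcases Nat.eq_zero_or_pos (Fintype.card D) with h0 | hn
  · simp [h0]
  · have hn' : (0:ℝ) < (Fintype.card D : ℝ) := by exact_mod_cast hn
    rw [div_le_one hn']
    exact_mod_cast Finset.card_le_card (Finset.subset_univ _) |>.trans (le_of_eq Finset.card_univ)

private lemma final_count {F D : Type*} [Field F] [Fintype F] [Fintype D]
    (hn : 0 < Fintype.card D) {ε δ : ℝ} (hε : 0 < ε)
    (u ustar v vstar : D → F) (K : Finset F)
    (hK : 1 / ε ≤ (K.card : ℝ))
    (hKx : ∀ x ∈ K, relDist (ustar + x • u) (vstar + x • v) < δ) :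
    ∃ C : Finset D, ((1 - δ - ε) * Fintype.card D ≤ (C.card : ℝ)) ∧
      (∀ y ∈ C, u y = v y) ∧ (∀ y ∈ C, ustar y = vstar y) := by
  have hn' : (0:ℝ) < (Fintype.card D : ℝ) := by exact_mod_cast hn
  set N : ℝ := (Fintype.card D : ℝ) with hN
  set C : Finset D := Finset.univ.filter (fun y => u y = v y ∧ ustar y = vstar y) with hC
  refine ⟨C, ?_, ?_, ?_⟩
  · -- the cardinality bound
    set A : F → Finset D :=
      fun x => Finset.univ.filter (fun y => (ustar + x • u) y = (vstar + x • v) y) with hAdef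
    have hA : ∀ x ∈ K, (1 - δ) * N < ((A x).card : ℝ) := fun x hx => agree_card_lt hn (hKx x hx)
    set B : F → Finset D := fun x => A x \ C with hB
    have hmemA : ∀ x y, y ∈ A x → ustar y + x * u y = vstar y + x * v y := by
      intro x y hy
      have := (Finset.mem_filter.mp hy).2
      simpa [Pi.add_apply, Pi.smul_apply, smul_eq_mul] using this
    have hdisj : ∀ x ∈ K, ∀ x' ∈ K, x ≠ x' → Disjoint (B x) (B x') := by
      intro x _ x' _ hne
      rw [Finset.disjoint_left]
      intro y hy hy'
      have h1 := hmemA x y (Finset.mem_sdiff.mp hy).1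
      have h2 := hmemA x' y (Finset.mem_sdiff.mp hy').1
      have hyC := (Finset.mem_sdiff.mp hy).2
      have huv : u y = v y := by
        have h3 : (x - x') * (u y - v y) = 0 := by linear_combination h1 - h2
        rcases mul_eq_zero.mp h3 with h4 | h4
        · exact absurd (sub_eq_zero.mp h4) hne
        · exact sub_eq_zero.mp h4
      have hstar : ustar y = vstar y := by
        rw [huv] at h1; linear_combination h1
      exact hyC (Finset.mem_filter.mpr ⟨Finset.mem_univ y, huv, hstar⟩)
    have h2 : ∑ x ∈ K, (B x).card ≤ Fintype.card D := by
      rw [← Finset.card_biUnion hdisj, ← Finset.card_univ]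
      exact Finset.card_le_card (Finset.subset_univ _)
    have hsum : ∑ x ∈ K, ((B x).card : ℝ) ≤ N := by
      rw [hN]; exact_mod_cast h2
    have hKpos : (0:ℝ) < (K.card : ℝ) := lt_of_lt_of_le (by positivity) hK
    have hKne : K.Nonempty := by
      rw [← Finset.card_pos]; exact_mod_cast hKpos
    obtain ⟨x, hxK, hxle⟩ : ∃ x ∈ K, ((B x).card : ℝ) ≤ N / K.card := by
      apply Finset.exists_le_of_sum_le hKne
      calc ∑ x ∈ K, ((B x).card : ℝ) ≤ N := hsum
        _ = ∑ _x ∈ K, (N / (K.card:ℝ)) := by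
            rw [Finset.sum_const, nsmul_eq_mul, mul_div_cancel₀ _ (ne_of_gt hKpos)]
    have hlow : N / K.card ≤ ε * N := by
      have h1 : 1 ≤ ε * K.card := by
        have := mul_le_mul_of_nonneg_left hK hε.le
        rwa [mul_one_div, div_self hε.ne'] at this
      rw [div_le_iff₀ hKpos]
      nlinarith [h1, hn'.le]
    have hcards : ((A x ∩ C).card : ℝ) = ((A x).card : ℝ) - ((B x).card : ℝ) := by
      have := Finset.card_sdiff_add_card_inter (A x) C
      push_cast [← this]; ring
    have hCge : ((A x ∩ C).card : ℝ) ≤ (C.card : ℝ) := by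
      exact_mod_cast Finset.card_le_card (Finset.inter_subset_right)
    have := hA x hxK
    nlinarith [this, hxle, hlow, hcards, hCge]
  · intro y hy; exact ((Finset.mem_filter.mp hy).2).1
  · intro y hy; exact ((Finset.mem_filter.mp hy).2).2
private lemma pair_select {F D : Type*} [Fintype D] [DecidableEq F] (S : Finset F)
    (A : F → Finset D) (θ : ℝ) (hθnn : 0 ≤ θ)
    (hθ : ∀ x ∈ S, θ * (Fintype.card D : ℝ) ≤ ((A x).card : ℝ))
    (hS2 : 2 ≤ S.card) (hD : 0 < Fintype.card D) :
    ∃ x1 ∈ S, ∃ x2 ∈ S, x1 ≠ x2 ∧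
      θ^3 * (S.card : ℝ) * (Fintype.card D : ℝ) - (Fintype.card D : ℝ)
        ≤ ∑ x3 ∈ S, ((A x1 ∩ A x2 ∩ A x3).card : ℝ) := by
  classical
  set N : ℝ := (Fintype.card D : ℝ) with hNdef
  set M : ℝ := (S.card : ℝ) with hMdef
  have hn' : (0:ℝ) < N := by rw [hNdef]; exact_mod_cast hD
  have hMpos : (0:ℝ) < M := by rw [hMdef]; exact_mod_cast lt_of_lt_of_le (by norm_num) hS2
  rcases le_or_gt (θ^3 * M * N - N) 0 with hc | hc
  · obtain ⟨x1, hx1, x2, hx2, hne⟩ := Finset.one_lt_card.mp (by omega : 1 < S.card)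
    exact ⟨x1, hx1, x2, hx2, hne,
      le_trans hc (Finset.sum_nonneg fun _ _ => Nat.cast_nonneg _)⟩
  set d : D → ℝ := fun y => ((S.filter (fun x => y ∈ A x)).card : ℝ) with hddef
  have hd : ∀ y : D, ∑ x ∈ S, (if y ∈ A x then (1:ℝ) else 0) = d y := by
    intro y
    simp only [hddef]
    exact Finset.sum_boole _ _
  have hdnn : ∀ y, 0 ≤ d y := fun y => Nat.cast_nonneg _
  -- step 1
  have e1 : ∑ y : D, d y = ∑ x ∈ S, ((A x).card : ℝ) := by
    simp_rw [← hd]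
    rw [Finset.sum_comm]
    refine Finset.sum_congr rfl fun x _ => ?_
    rw [Finset.sum_boole]
    norm_num [Finset.filter_univ_mem]
  have step1 : θ*N*M ≤ ∑ y : D, d y := by
    rw [e1]
    calc θ*N*M = ∑ _x ∈ S, θ*N := by rw [Finset.sum_const, nsmul_eq_mul]; ring
      _ ≤ ∑ x ∈ S, ((A x).card:ℝ) := Finset.sum_le_sum hθ
  -- step 2 (Jensen)
  have step2 : θ^3 * M^3 * N ≤ ∑ y : D, (d y)^3 := by
    have hp := pow_sum_div_card_le_sum_pow (s := (Finset.univ : Finset D))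
      (f := d) (fun i _ => hdnn i) 2
    have hcard : ((Finset.univ : Finset D).card : ℝ) = N := by
      rw [Finset.card_univ]
    rw [hcard] at hp
    have hnum : (θ*N*M)^(2+1) ≤ (∑ y : D, d y)^(2+1) :=
      pow_le_pow_left₀ (by positivity) step1 _
    have he : θ^3 * M^3 * N = (θ*N*M)^(2+1) / N^2 := by
      field_simp; ring
    rw [he]
    calc (θ*N*M)^(2+1) / N^2 ≤ (∑ y : D, d y)^(2+1) / N^2 := by gcongr
      _ ≤ ∑ y : D, (d y)^(2+1) := hp
      _ = ∑ y : D, (d y)^3 := by norm_num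
  -- triple sum identity
  have hTcard : ∀ x1 x2 x3 : F, ((A x1 ∩ A x2 ∩ A x3).card : ℝ)
      = ∑ y : D, (if y ∈ A x1 then (1:ℝ) else 0) * (if y ∈ A x2 then (1:ℝ) else 0)
          * (if y ∈ A x3 then (1:ℝ) else 0) := by
    intro x1 x2 x3
    have he : ∀ y : D, (if y ∈ A x1 then (1:ℝ) else 0) * (if y ∈ A x2 then (1:ℝ) else 0)
        * (if y ∈ A x3 then (1:ℝ) else 0)
        = if y ∈ A x1 ∩ A x2 ∩ A x3 then (1:ℝ) else 0 := by
      intro y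
      by_cases h1 : y ∈ A x1 <;> by_cases h2 : y ∈ A x2 <;> by_cases h3 : y ∈ A x3 <;>
        simp [h1, h2, h3, Finset.mem_inter]
    rw [Finset.sum_congr rfl (fun y _ => he y), Finset.sum_boole]
    norm_num
    congr 1
    ext y
    simp [Finset.mem_inter, and_assoc]
  set T : F → F → ℝ := fun x1 x2 => ∑ x3 ∈ S, ((A x1 ∩ A x2 ∩ A x3).card:ℝ) with hTdef
  have htriple : ∑ x1 ∈ S, ∑ x2 ∈ S, T x1 x2 = ∑ y : D, (d y)^3 := by
    have e3 : ∀ x1 x2 : F, T x1 x2 = ∑ y : D,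
        (if y ∈ A x1 then (1:ℝ) else 0) * (if y ∈ A x2 then (1:ℝ) else 0) * d y := by
      intro x1 x2
      simp only [hTdef]
      simp_rw [hTcard]
      rw [Finset.sum_comm]
      refine Finset.sum_congr rfl fun y _ => ?_
      rw [← hd y, Finset.mul_sum]
    have e4 : ∀ x1 : F, ∑ x2 ∈ S, ∑ y : D,
        (if y ∈ A x1 then (1:ℝ) else 0) * (if y ∈ A x2 then (1:ℝ) else 0) * d y
        = ∑ y : D, (if y ∈ A x1 then (1:ℝ) else 0) * (d y)^2 := by
      intro x1
      rw [Finset.sum_comm]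
      refine Finset.sum_congr rfl fun y _ => ?_
      have he : ∑ x2 ∈ S, (if y ∈ A x1 then (1:ℝ) else 0) * (if y ∈ A x2 then (1:ℝ) else 0) * d y
          = ((if y ∈ A x1 then (1:ℝ) else 0) * d y) * ∑ x2 ∈ S, (if y ∈ A x2 then (1:ℝ) else 0) := by
        rw [Finset.mul_sum]
        exact Finset.sum_congr rfl fun x2 _ => by ring
      rw [he, hd y]; ring
    have e5 : ∑ x1 ∈ S, ∑ y : D, (if y ∈ A x1 then (1:ℝ) else 0) * (d y)^2
        = ∑ y : D, (d y)^3 := by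
      rw [Finset.sum_comm]
      refine Finset.sum_congr rfl fun y _ => ?_
      rw [← Finset.sum_mul, hd y]; ring
    calc ∑ x1 ∈ S, ∑ x2 ∈ S, T x1 x2
        = ∑ x1 ∈ S, ∑ x2 ∈ S, ∑ y : D,
            (if y ∈ A x1 then (1:ℝ) else 0) * (if y ∈ A x2 then (1:ℝ) else 0) * d y :=
          Finset.sum_congr rfl fun x1 _ => Finset.sum_congr rfl fun x2 _ => e3 x1 x2
      _ = ∑ x1 ∈ S, ∑ y : D, (if y ∈ A x1 then (1:ℝ) else 0) * (d y)^2 :=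
          Finset.sum_congr rfl fun x1 _ => e4 x1
      _ = ∑ y : D, (d y)^3 := e5
  have hTle : ∀ x1 x2, T x1 x2 ≤ M * N := by
    intro x1 x2
    have hterm : ∀ x3 ∈ S, ((A x1 ∩ A x2 ∩ A x3).card:ℝ) ≤ N := by
      intro x3 _
      rw [hNdef]
      exact_mod_cast le_trans (Finset.card_le_card (Finset.subset_univ _))
        (le_of_eq Finset.card_univ)
    calc T x1 x2 ≤ ∑ _x3 ∈ S, N := Finset.sum_le_sum hterm
      _ = M * N := by rw [Finset.sum_const, nsmul_eq_mul]
  set G : F × F → ℝ := fun p => if p.1 = p.2 then 0 else T p.1 p.2 with hGdef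
  have hGsum : θ^3 * M^3 * N - M^2 * N ≤ ∑ p ∈ S ×ˢ S, G p := by
    have h1 : ∑ p ∈ S ×ˢ S, G p = ∑ x1 ∈ S, ∑ x2 ∈ S, G (x1, x2) := by
      rw [Finset.sum_product]
    have h2 : ∀ x1 ∈ S, ∑ x2 ∈ S, (T x1 x2 - G (x1,x2)) ≤ M * N := by
      intro x1 hx1
      have he : ∀ x2, T x1 x2 - G (x1,x2) = if x1 = x2 then T x1 x2 else 0 := by
        intro x2; by_cases h : x1 = x2 <;> simp [hGdef, h]
      rw [Finset.sum_congr rfl (fun x2 _ => he x2), Finset.sum_ite_eq S x1 (fun x2 => T x1 x2),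
        if_pos hx1]
      exact hTle x1 x1
    have h3 : θ^3*M^3*N ≤ ∑ x1 ∈ S, ∑ x2 ∈ S, T x1 x2 := by
      rw [htriple]; exact step2
    have h4 : ∑ x1 ∈ S, ∑ x2 ∈ S, (T x1 x2 - G (x1,x2)) ≤ M * (M*N) := by
      calc ∑ x1 ∈ S, ∑ x2 ∈ S, (T x1 x2 - G (x1,x2)) ≤ ∑ _x1 ∈ S, M*N :=
            Finset.sum_le_sum h2
        _ = M * (M*N) := by rw [Finset.sum_const, nsmul_eq_mul]
    have h5 : ∑ x1 ∈ S, ∑ x2 ∈ S, (T x1 x2 - G (x1,x2))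
        = ∑ x1 ∈ S, ∑ x2 ∈ S, T x1 x2 - ∑ x1 ∈ S, ∑ x2 ∈ S, G (x1,x2) := by
      rw [← Finset.sum_sub_distrib]
      exact Finset.sum_congr rfl fun x1 _ => by rw [Finset.sum_sub_distrib]
    have h6 : M*(M*N) = M^2*N := by ring
    rw [h1]
    linarith [h3, h4, h5, h6]
  have hSS : (S ×ˢ S).Nonempty := by
    have hSne : S.Nonempty := Finset.card_pos.mp (by omega)
    exact hSne.product hSne
  obtain ⟨p, hp, hple⟩ : ∃ p ∈ S ×ˢ S, (θ^3*M*N - N) ≤ G p := by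
    apply Finset.exists_le_of_sum_le hSS
    have hconst : ∑ _p ∈ S ×ˢ S, (θ^3*M*N - N) = M^2 * (θ^3*M*N - N) := by
      rw [Finset.sum_const, nsmul_eq_mul, Finset.card_product]
      push_cast
      rw [← hMdef]
      ring
    rw [hconst]
    calc M^2 * (θ^3*M*N - N) = θ^3*M^3*N - M^2*N := by ring
      _ ≤ ∑ p ∈ S ×ˢ S, G p := hGsum
  have hne : p.1 ≠ p.2 := by
    intro h
    have hG0 : G p = 0 := by simp [hGdef, h]
    rw [hG0] at hple
    linarith
  have hGp : G p = T p.1 p.2 := by simp [hGdef, hne]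
  obtain ⟨hx1, hx2⟩ := Finset.mem_product.mp hp
  refine ⟨p.1, hx1, p.2, hx2, hne, ?_⟩
  have : T p.1 p.2 = ∑ x3 ∈ S, ((A p.1 ∩ A p.2 ∩ A x3).card:ℝ) := by rw [hTdef]
  rw [← this, ← hGp]
  exact hple
set_option maxHeartbeats 1000000 in
theorem stmt1 {F D : Type*} [Field F] [Fintype F] [Fintype D]
    (V : Submodule F (D → F)) (lam ε δ : ℝ)
    (hlam : ∀ v ∈ V, ∀ v' ∈ V, v ≠ v' → lam ≤ relDist v v')
    (hε : 0 < ε) (hε3 : ε < 1/3) (hδ0 : 0 < δ)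
    (hδ : δ < 1 - (1 - lam + ε) ^ ((1:ℝ)/3))
    (u ustar : D → F)
    (hpr : 2 / (ε ^ 2 * Fintype.card F) ≤
      (({x : F | ∃ v ∈ V, relDist (ustar + x • u) v < δ} : Set F).ncard : ℝ)
        / (Fintype.card F)) :
    ∃ v ∈ V, ∃ vstar ∈ V, ∃ C : Finset D,
      ((1 - δ - ε) * Fintype.card D ≤ (C.card : ℝ)) ∧
      (∀ y ∈ C, u y = v y) ∧ (∀ y ∈ C, ustar y = vstar y) := by
  classical
  rcases Nat.eq_zero_or_pos (Fintype.card D) with hD0 | hD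
  · exact ⟨0, V.zero_mem, 0, V.zero_mem, ∅, by simp [hD0], by simp, by simp⟩
  have hn' : (0:ℝ) < (Fintype.card D : ℝ) := by exact_mod_cast hD
  set N : ℝ := (Fintype.card D : ℝ) with hNdef
  set S : Finset F := Finset.univ.filter (fun x => ∃ v ∈ V, relDist (ustar + x • u) v < δ)
    with hSdef
  have hSeq : ({x : F | ∃ v ∈ V, relDist (ustar + x • u) v < δ} : Set F) = ↑S := by
    ext x; simp [hSdef]
  rw [hSeq, Set.ncard_coe_finset] at hpr
  have hq' : (0:ℝ) < (Fintype.card F : ℝ) := by exact_mod_cast Fintype.card_pos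
  set M : ℝ := (S.card : ℝ) with hMdef
  have hM : 2 / ε ^ 2 ≤ M := by
    rw [div_le_div_iff₀ (by positivity) hq'] at hpr
    have h2 : 2 * (Fintype.card F:ℝ) ≤ M * ε ^ 2 * (Fintype.card F:ℝ) := by
      calc 2 * (Fintype.card F:ℝ) ≤ M * (ε ^ 2 * (Fintype.card F:ℝ)) := hpr
        _ = M * ε ^ 2 * (Fintype.card F:ℝ) := by ring
    have h3 : 2 ≤ M * ε ^ 2 := le_of_mul_le_mul_right (by linarith [h2]) hq'
    rw [div_le_iff₀ (by positivity)]
    linarith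
  have hε1 : ε < 1 := by linarith
  have hMpos : (0:ℝ) < M := lt_of_lt_of_le (by positivity) hM
  have hpow_nonneg : (0:ℝ) ≤ (1 - lam + ε) ^ ((1:ℝ)/3) := by
    rcases le_or_gt 0 (1 - lam + ε) with h | h
    · exact Real.rpow_nonneg h _
    · rw [Real.rpow_def_of_neg h]
      rw [show (1:ℝ)/3 * Real.pi = Real.pi / 3 by ring, Real.cos_pi_div_three]
      positivity
  have hδ1 : δ < 1 := by linarith
  have h1δ : (0:ℝ) ≤ 1 - δ := by linarith
  -- degenerate code
  by_cases hVtriv : ∀ a ∈ V, a = (0 : D → F)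
  · have hKcard : 1 / ε ≤ M := by
      have : 1 / ε ≤ 2 / ε ^ 2 := by
        rw [div_le_div_iff₀ hε (by positivity)]
        nlinarith
      linarith
    have hKx : ∀ x ∈ S, relDist (ustar + x • u) ((0:D→F) + x • (0:D→F)) < δ := by
      intro x hx
      obtain ⟨w, hwV, hwd⟩ := (Finset.mem_filter.mp hx).2
      have hw0 : w = (0:D→F) := hVtriv w hwV
      rw [hw0] at hwd
      simpa using hwd
    obtain ⟨C, hC1, hC2, hC3⟩ := final_count hD hε u ustar 0 0 S hKcard hKx
    exact ⟨0, V.zero_mem, 0, V.zero_mem, C, hC1, hC2, hC3⟩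
  -- nondegenerate: ε ≤ lam ≤ 1
  push_neg at hVtriv
  obtain ⟨a, haV, ha0⟩ := hVtriv
  have hlam1 : lam ≤ 1 :=
    le_trans (hlam a haV 0 V.zero_mem ha0) (relDist_le_one a 0)
  have hbase : (0:ℝ) ≤ 1 - lam + ε := by linarith
  have hcube : 1 - lam + ε ≤ (1 - δ)^3 := by
    have h1 : (1 - lam + ε) ^ ((1:ℝ)/3) < 1 - δ := by linarith
    have h2 : ((1 - lam + ε) ^ ((1:ℝ)/3)) ^ (3:ℕ) ≤ (1-δ)^(3:ℕ) :=
      pow_le_pow_left₀ (Real.rpow_nonneg hbase _) h1.le 3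
    have h3 : ((1 - lam + ε) ^ ((1:ℝ)/3)) ^ (3:ℕ) = 1 - lam + ε := by
      rw [← Real.rpow_natCast ((1-lam+ε) ^ ((1:ℝ)/3)) 3, ← Real.rpow_mul hbase]
      norm_num
    calc 1 - lam + ε = ((1 - lam + ε) ^ ((1:ℝ)/3)) ^ (3:ℕ) := h3.symm
      _ ≤ (1-δ)^(3:ℕ) := h2
      _ = (1-δ)^3 := by norm_num
  have h9 : (1-δ)^3 ≤ 1 := by nlinarith [hδ0, hδ1, sq_nonneg (1-δ), sq_nonneg δ]
  have hlamε : ε ≤ lam := by linarith [hcube, h9]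
  -- choose close codewords (skolemized, opaque)
  obtain ⟨vx, hvxP⟩ : ∃ vx : F → (D → F),
      ∀ x ∈ S, vx x ∈ V ∧ relDist (ustar + x • u) (vx x) < δ := by
    refine ⟨fun x => if h : ∃ w ∈ V, relDist (ustar + x • u) w < δ then h.choose else 0, ?_⟩
    intro x hx
    have h := (Finset.mem_filter.mp hx).2
    simp only [dif_pos h]
    exact ⟨h.choose_spec.1, h.choose_spec.2⟩
  obtain ⟨A, hAdef⟩ : ∃ A : F → Finset D,
      ∀ x, A x = Finset.univ.filter (fun y => (ustar + x • u) y = vx x y) :=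
    ⟨_, fun _ => rfl⟩
  have hA : ∀ x ∈ S, (1 - δ) * N ≤ ((A x).card : ℝ) := by
    intro x hx
    rw [hAdef]
    exact (agree_card_lt hD (hvxP x hx).2).le
  have hAmem : ∀ x y, y ∈ A x → ustar y + x * u y = vx x y := by
    intro x y hy
    rw [hAdef] at hy
    have := (Finset.mem_filter.mp hy).2
    simpa [Pi.add_apply, Pi.smul_apply, smul_eq_mul] using this
  have hS2 : 2 ≤ S.card := by
    have h2M : (2:ℝ) ≤ M := by
      have h2e : (2:ℝ) ≤ 2/ε^2 := by
        rw [le_div_iff₀ (by positivity)]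
        nlinarith [hε, hε1]
      linarith
    rw [hMdef] at h2M
    exact_mod_cast h2M
  obtain ⟨x1, hx1, x2, hx2, hne, hpair⟩ := pair_select S A (1-δ) h1δ hA hS2 hD
  have hTlow : (1-lam+ε)*M*N - N ≤ ∑ x3 ∈ S, ((A x1 ∩ A x2 ∩ A x3).card:ℝ) := by
    refine le_trans ?_ hpair
    have hmn := mul_le_mul_of_nonneg_right hcube (show (0:ℝ) ≤ M*N by positivity)
    nlinarith [hmn]
  have hx12 : x1 - x2 ≠ 0 := sub_ne_zero.mpr hne
  -- the candidate codewords
  obtain ⟨v, hvdef⟩ : ∃ v : D → F, v = (x1 - x2)⁻¹ • (vx x1 - vx x2) := ⟨_, rfl⟩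
  obtain ⟨vst, hvstdef⟩ : ∃ w : D → F, w = vx x1 - x1 • v := ⟨_, rfl⟩
  have hvV : v ∈ V := by
    rw [hvdef]
    exact Submodule.smul_mem _ _
      (Submodule.sub_mem _ (hvxP x1 hx1).1 (hvxP x2 hx2).1)
  have hvstV : vst ∈ V := by
    rw [hvstdef]
    exact Submodule.sub_mem _ (hvxP x1 hx1).1 (Submodule.smul_mem _ _ hvV)
  have hkey : ∀ y ∈ A x1 ∩ A x2, u y = v y ∧ ustar y = vst y := by
    intro y hy
    have h1 : ustar y + x1 * u y = vx x1 y := hAmem x1 y (Finset.mem_inter.mp hy).1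
    have h2 : ustar y + x2 * u y = vx x2 y := hAmem x2 y (Finset.mem_inter.mp hy).2
    have huy : u y = v y := by
      rw [hvdef]
      simp only [Pi.smul_apply, Pi.sub_apply, smul_eq_mul]
      rw [inv_mul_eq_div, eq_div_iff hx12]
      linear_combination h1 - h2
    refine ⟨huy, ?_⟩
    rw [hvstdef]
    simp only [Pi.sub_apply, Pi.smul_apply, smul_eq_mul]
    rw [← huy]
    linear_combination h1
  have hkey3 : ∀ x3, (A x1 ∩ A x2 ∩ A x3) ⊆
      Finset.univ.filter (fun y => vx x3 y = (vst + x3 • v) y) := by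
    intro x3 y hy
    have hy12 := (Finset.mem_inter.mp hy).1
    have hy3 := (Finset.mem_inter.mp hy).2
    obtain ⟨huy, hsy⟩ := hkey y hy12
    have h3 : ustar y + x3 * u y = vx x3 y := hAmem x3 y hy3
    refine Finset.mem_filter.mpr ⟨Finset.mem_univ _, ?_⟩
    simp only [Pi.add_apply, Pi.smul_apply, smul_eq_mul]
    rw [← hsy, ← huy]
    linear_combination -h3
  -- the set of consistent evaluation points
  obtain ⟨K, hKdef⟩ : ∃ K : Finset F, K = S.filter (fun x3 => vx x3 = vst + x3 • v) :=
    ⟨_, rfl⟩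
  have hTsplit : ∑ x3 ∈ S, ((A x1 ∩ A x2 ∩ A x3).card:ℝ)
      ≤ (K.card:ℝ) * N + (M - (K.card:ℝ)) * ((1-lam)*N) := by
    have hsplit := Finset.sum_filter_add_sum_filter_not S (fun x3 => vx x3 = vst + x3 • v)
      (fun x3 => ((A x1 ∩ A x2 ∩ A x3).card:ℝ))
    have hb1 : ∑ x3 ∈ S.filter (fun x3 => vx x3 = vst + x3 • v),
        ((A x1 ∩ A x2 ∩ A x3).card:ℝ) ≤ (K.card:ℝ) * N := by
      rw [← hKdef]
      calc ∑ x3 ∈ K, ((A x1 ∩ A x2 ∩ A x3).card:ℝ) ≤ ∑ _x3 ∈ K, N := by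
            refine Finset.sum_le_sum fun x3 _ => ?_
            rw [hNdef]
            exact_mod_cast le_trans (Finset.card_le_card (Finset.subset_univ _))
              (le_of_eq Finset.card_univ)
        _ = (K.card:ℝ) * N := by rw [Finset.sum_const, nsmul_eq_mul]
    have hb2 : ∑ x3 ∈ S.filter (fun x3 => ¬ vx x3 = vst + x3 • v),
        ((A x1 ∩ A x2 ∩ A x3).card:ℝ)
        ≤ ((S.filter (fun x3 => ¬ vx x3 = vst + x3 • v)).card:ℝ) * ((1-lam)*N) := by
      have hterm : ∀ x3 ∈ S.filter (fun x3 => ¬ vx x3 = vst + x3 • v),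
          ((A x1 ∩ A x2 ∩ A x3).card:ℝ) ≤ (1-lam)*N := by
        intro x3 hx3
        have hx3S : x3 ∈ S := (Finset.mem_filter.mp hx3).1
        have hx3ne : vx x3 ≠ vst + x3 • v := (Finset.mem_filter.mp hx3).2
        have hwV : vst + x3 • v ∈ V := Submodule.add_mem _ hvstV (Submodule.smul_mem _ _ hvV)
        have hdist := hlam (vx x3) (hvxP x3 hx3S).1 (vst + x3 • v) hwV hx3ne
        have hagree := agree_card_le (F := F) hdist
        calc ((A x1 ∩ A x2 ∩ A x3).card:ℝ)
            ≤ ((Finset.univ.filter (fun y => vx x3 y = (vst + x3 • v) y)).card : ℝ) := by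
              exact_mod_cast Finset.card_le_card (hkey3 x3)
          _ ≤ (1-lam)*N := hagree
      calc ∑ x3 ∈ S.filter (fun x3 => ¬ vx x3 = vst + x3 • v),
            ((A x1 ∩ A x2 ∩ A x3).card:ℝ)
          ≤ ∑ _x3 ∈ S.filter (fun x3 => ¬ vx x3 = vst + x3 • v), (1-lam)*N :=
            Finset.sum_le_sum hterm
        _ = ((S.filter (fun x3 => ¬ vx x3 = vst + x3 • v)).card:ℝ) * ((1-lam)*N) := by
            rw [Finset.sum_const, nsmul_eq_mul]
    have hcards : (K.card:ℝ) + ((S.filter (fun x3 => ¬ vx x3 = vst + x3 • v)).card:ℝ) = M := by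
      rw [hKdef, hMdef]
      exact_mod_cast Finset.card_filter_add_card_filter_not
        (s := S) (p := fun x3 => vx x3 = vst + x3 • v)
    have heq : ∑ x3 ∈ S, ((A x1 ∩ A x2 ∩ A x3).card:ℝ)
        = ∑ x3 ∈ S.filter (fun x3 => vx x3 = vst + x3 • v), ((A x1 ∩ A x2 ∩ A x3).card:ℝ)
        + ∑ x3 ∈ S.filter (fun x3 => ¬ vx x3 = vst + x3 • v), ((A x1 ∩ A x2 ∩ A x3).card:ℝ) :=
      hsplit.symm
    rw [heq]
    have hms : M - (K.card:ℝ) = ((S.filter (fun x3 => ¬ vx x3 = vst + x3 • v)).card:ℝ) := by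
      linarith [hcards]
    rw [hms]
    linarith [hb1, hb2]
  -- K is large
  have hKcard : 1 / ε ≤ (K.card:ℝ) := by
    have hk0 : (0:ℝ) ≤ (K.card:ℝ) := Nat.cast_nonneg _
    have hineq : (1-lam+ε)*M*N - N ≤ (K.card:ℝ)*N + (M-(K.card:ℝ))*((1-lam)*N) :=
      le_trans hTlow hTsplit
    have hklam : ε*M - 1 ≤ (K.card:ℝ) * lam := by
      have hineq2 : ((1-lam+ε)*M - 1) * N ≤ ((K.card:ℝ) + (M-(K.card:ℝ))*(1-lam)) * N := by
        nlinarith [hineq]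
      have h7 := le_of_mul_le_mul_right (by nlinarith [hineq2]) hn'
      nlinarith [h7]
    have hkk : ε*M - 1 ≤ (K.card:ℝ) := by nlinarith [hklam, hlam1, hk0, hlamε]
    have hεM : 2/ε ≤ ε * M := by
      have he2 : ε * (2/ε^2) = 2/ε := by field_simp
      nlinarith [mul_le_mul_of_nonneg_left hM hε.le]
    have h8 : 1/ε + 1 ≤ 2/ε := by
      rw [div_add' _ _ _ hε.ne', div_le_div_iff₀ hε hε]
      nlinarith
    linarith
  have hKx : ∀ x ∈ K, relDist (ustar + x • u) (vst + x • v) < δ := by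
    intro x hx
    rw [hKdef] at hx
    have hxS := (Finset.mem_filter.mp hx).1
    have hxeq : vx x = vst + x • v := (Finset.mem_filter.mp hx).2
    rw [← hxeq]
    exact (hvxP x hxS).2
  obtain ⟨C, hC1, hC2, hC3⟩ := final_count hD hε u ustar v vst K hKcard hKx
  exact ⟨v, hvV, vst, hvstV, C, hC1, hC2, hC3⟩
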